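/- Let G, Q ∈ ℝ^{n×n} be symmetric with G invertible, write H := G⁻¹, and let S ∈ ℝ^{n×q} be such that SᵀQS and SᵀQHQS are invertible. Let G⁺ := Q·P(S,Q)·Q + (I − Q·P(S,Q))·G·(I − P(S,Q)·Q) be the direct quNac update of G, where P(S,Q) := S(SᵀQS)⁻¹Sᵀ. Then G⁺ is invertible and its inverse is given explicitly by (G⁺)⁻¹ = H + S(SᵀQS)⁻¹Sᵀ − H·Q·S(SᵀQHQS)⁻¹Sᵀ·Q·H. -/

import Mathlib

open Matrix

/-- The projection-type matrix `P(S,Q) := S (Sᵀ Q S)⁻¹ Sᵀ`. -/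
noncomputable def projMat {n q : ℕ} (S : Matrix (Fin n) (Fin q) ℝ)
    (Q : Matrix (Fin n) (Fin n) ℝ) : Matrix (Fin n) (Fin n) ℝ :=
  S * (Sᵀ * Q * S)⁻¹ * Sᵀ

lemma quNacKey {n q : ℕ} (G H Q : Matrix (Fin n) (Fin n) ℝ)
    (S : Matrix (Fin n) (Fin q) ℝ) (A B : Matrix (Fin q) (Fin q) ℝ)
    (hGH : G * H = 1) (hHG : H * G = 1)
    (hA1 : A * (Sᵀ * Q * S) = 1) (hA2 : (Sᵀ * Q * S) * A = 1)
    (hB1 : B * (Sᵀ * Q * H * Q * S) = 1) (hB2 : (Sᵀ * Q * H * Q * S) * B = 1) :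
    (Q * (S * A * Sᵀ) * Q + (1 - Q * (S * A * Sᵀ)) * G * (1 - (S * A * Sᵀ) * Q)) *
      (H + S * A * Sᵀ - H * Q * S * B * Sᵀ * Q * H) = 1 := by
  have e1 : ∀ x : Matrix (Fin q) (Fin n) ℝ, A * (Sᵀ * (Q * (S * x))) = x := by
    intro x
    calc A * (Sᵀ * (Q * (S * x))) = (A * (Sᵀ * Q * S)) * x := by
          simp only [Matrix.mul_assoc]
      _ = x := by rw [hA1, Matrix.one_mul]
  have e1' : A * (Sᵀ * (Q * S)) = 1 := by
    have := hA1; simpa only [Matrix.mul_assoc] using this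
  have e2 : ∀ x : Matrix (Fin q) (Fin n) ℝ, Sᵀ * (Q * (S * (A * x))) = x := by
    intro x
    calc Sᵀ * (Q * (S * (A * x))) = ((Sᵀ * Q * S) * A) * x := by
          simp only [Matrix.mul_assoc]
      _ = x := by rw [hA2, Matrix.one_mul]
  have e2' : Sᵀ * (Q * (S * A)) = 1 := by
    have := hA2; simpa only [Matrix.mul_assoc] using this
  have e3 : ∀ x : Matrix (Fin q) (Fin n) ℝ, B * (Sᵀ * (Q * (H * (Q * (S * x))))) = x := by
    intro x
    calc B * (Sᵀ * (Q * (H * (Q * (S * x))))) = (B * (Sᵀ * Q * H * Q * S)) * x := by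
          simp only [Matrix.mul_assoc]
      _ = x := by rw [hB1, Matrix.one_mul]
  have e3' : B * (Sᵀ * (Q * (H * (Q * S)))) = 1 := by
    have := hB1; simpa only [Matrix.mul_assoc] using this
  have e4 : ∀ x : Matrix (Fin q) (Fin n) ℝ, Sᵀ * (Q * (H * (Q * (S * (B * x))))) = x := by
    intro x
    calc Sᵀ * (Q * (H * (Q * (S * (B * x))))) = ((Sᵀ * Q * H * Q * S) * B) * x := by
          simp only [Matrix.mul_assoc]
      _ = x := by rw [hB2, Matrix.one_mul]
  have e4' : Sᵀ * (Q * (H * (Q * (S * B)))) = 1 := by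
    have := hB2; simpa only [Matrix.mul_assoc] using this
  have e5 : ∀ x : Matrix (Fin n) (Fin n) ℝ, G * (H * x) = x := by
    intro x; rw [← Matrix.mul_assoc, hGH, one_mul]
  have e6 : ∀ x : Matrix (Fin n) (Fin n) ℝ, H * (G * x) = x := by
    intro x; rw [← Matrix.mul_assoc, hHG, one_mul]
  simp only [mul_add, add_mul, mul_sub, sub_mul, mul_one, one_mul, Matrix.mul_one, Matrix.one_mul, Matrix.mul_assoc,
    e1, e2, e3, e4, e5, e6, e1', e2', e3', e4', hGH, hHG]
  abel

/-- Woodbury-type formula for the inverse of the direct quNac update: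
`(G⁺)⁻¹ = H + S(SᵀQS)⁻¹Sᵀ − HQS(SᵀQHQS)⁻¹SᵀQH` where `H = G⁻¹`. -/
theorem stmt14 {n q : ℕ} (G Q : Matrix (Fin n) (Fin n) ℝ)
    (hG : G.IsSymm) (hQ : Q.IsSymm) (hGinv : IsUnit G)
    (S : Matrix (Fin n) (Fin q) ℝ)
    (hSQS : IsUnit (Sᵀ * Q * S)) (hSQHQS : IsUnit (Sᵀ * Q * G⁻¹ * Q * S)) :
    IsUnit (Q * projMat S Q * Q + (1 - Q * projMat S Q) * G * (1 - projMat S Q * Q)) ∧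
    (Q * projMat S Q * Q + (1 - Q * projMat S Q) * G * (1 - projMat S Q * Q))⁻¹ =
      G⁻¹ + S * (Sᵀ * Q * S)⁻¹ * Sᵀ -
        G⁻¹ * Q * S * (Sᵀ * Q * G⁻¹ * Q * S)⁻¹ * Sᵀ * Q * G⁻¹ := by
  have hGd : IsUnit G.det := (Matrix.isUnit_iff_isUnit_det G).mp hGinv
  have hAd : IsUnit (Sᵀ * Q * S).det := (Matrix.isUnit_iff_isUnit_det _).mp hSQS
  have hBd : IsUnit (Sᵀ * Q * G⁻¹ * Q * S).det := (Matrix.isUnit_iff_isUnit_det _).mp hSQHQS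
  have key := quNacKey G G⁻¹ Q S (Sᵀ * Q * S)⁻¹ (Sᵀ * Q * G⁻¹ * Q * S)⁻¹
    (Matrix.mul_nonsing_inv G hGd) (Matrix.nonsing_inv_mul G hGd)
    (Matrix.nonsing_inv_mul _ hAd) (Matrix.mul_nonsing_inv _ hAd)
    (Matrix.nonsing_inv_mul _ hBd) (Matrix.mul_nonsing_inv _ hBd)
  have key' : (Q * projMat S Q * Q + (1 - Q * projMat S Q) * G * (1 - projMat S Q * Q)) *
      (G⁻¹ + S * (Sᵀ * Q * S)⁻¹ * Sᵀ -
        G⁻¹ * Q * S * (Sᵀ * Q * G⁻¹ * Q * S)⁻¹ * Sᵀ * Q * G⁻¹) = 1 := by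
    simpa only [projMat, Matrix.mul_assoc] using key
  exact ⟨(Matrix.isUnit_iff_isUnit_det _).mpr (Matrix.isUnit_det_of_right_inverse key'), Matrix.inv_eq_right_inv key'⟩
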